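/- Let k = 5 and let σ = (σ^{ij})_{1≤i,j≤5} be an admissible family such that σ^{12} is the 4×4 identity matrix and the 20 × 20 block matrix σ has rank 8. Then: (i) σ^{ji} = σ^{1j} σ^{2i} − σ^{2j} σ^{1i} for all 3 ≤ i, j ≤ 5; and (ii) for all t₁, t₂, t₃ ∈ ℂ the matrices t₁σ^{13} + t₂σ^{14} + t₃σ^{15} and t₁σ^{23} + t₂σ^{24} + t₃σ^{25} commute. -/
import Mathlib


open Matrix

/-- A family `σ = (σ^{ij})` of complex `4×4` matrices is *admissible* if each `σ i j` is
symmetric and `σ i j = -σ j i`. -/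
def Admissible (k : ℕ) (σ : Fin k → Fin k → Matrix (Fin 4) (Fin 4) ℂ) : Prop :=
  (∀ i j, (σ i j)ᵀ = σ i j) ∧ (∀ i j, σ i j = -σ j i)

/-- The `4k × 4k` block matrix whose `(i,j)` block is `σ i j`. -/
def blockMat (k : ℕ) (σ : Fin k → Fin k → Matrix (Fin 4) (Fin 4) ℂ) :
    Matrix (Fin k × Fin 4) (Fin k × Fin 4) ℂ :=
  Matrix.of fun p q => σ p.1 q.1 p.2 q.2

open Submodule Module in
/-- Let `k = 5` and let `σ` be an admissible family with `σ¹² = 1` (the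
`4×4` identity) and `20 × 20` block matrix of rank `8`.  Then (i)
`σ^{ji} = σ^{1j} σ^{2i} − σ^{2j} σ^{1i}` for all `3 ≤ i, j ≤ 5` (1-indexed; indices `0,1`
and `2 ≤ i` below), and (ii) for all `t₁, t₂, t₃ ∈ ℂ` the matrices
`t₁σ^{13} + t₂σ^{14} + t₃σ^{15}` and `t₁σ^{23} + t₂σ^{24} + t₃σ^{25}` commute. -/
theorem stmt6 (σ : Fin 5 → Fin 5 → Matrix (Fin 4) (Fin 4) ℂ) (hσ : Admissible 5 σ)
    (h12 : σ 0 1 = 1) (hrank : (blockMat 5 σ).rank = 8) :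
    (∀ i j : Fin 5, 2 ≤ (i : ℕ) → 2 ≤ (j : ℕ) →
        σ j i = σ 0 j * σ 1 i - σ 1 j * σ 0 i) ∧
      ∀ t1 t2 t3 : ℂ,
        Commute (t1 • σ 0 2 + t2 • σ 0 3 + t3 • σ 0 4)
          (t1 • σ 1 2 + t2 • σ 1 3 + t3 • σ 1 4) := by
  obtain ⟨hsym, hanti⟩ := hσ
  have main : ∀ i j : Fin 5, σ j i = σ 0 j * σ 1 i - σ 1 j * σ 0 i := by
    have h21 : σ 1 0 = -1 := by rw [hanti 1 0, h12]
    have hdiag : ∀ i, σ i i = 0 := by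
      intro i
      have h := hanti i i
      have h2 : (2 : ℂ) • σ i i = 0 := by rw [two_smul]; nth_rewrite 1 [h]; simp
      simpa using (smul_eq_zero.1 h2).resolve_left two_ne_zero
    set M := blockMat 5 σ with hM
    set f : Fin 2 × Fin 4 → (Fin 5 × Fin 4 → ℂ) :=
      fun v p => M p (![0, 1] v.1, v.2) with hf
    have hfW : ∀ v, f v ∈ LinearMap.range M.mulVecLin := by
      intro v
      refine ⟨Pi.single (![0, 1] v.1, v.2) 1, ?_⟩
      ext p
      simp [f, Matrix.mulVecLin_apply]
    have hind : LinearIndependent ℂ f := by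
      rw [Fintype.linearIndependent_iff]
      intro c hc v
      have h0 : ∀ b : Fin 4, c (0, b) = 0 := by
        intro b
        have := congrFun hc (1, b)
        simp [f, hM, blockMat, Fintype.sum_prod_type, Fin.sum_univ_two, h21, hdiag,
          Matrix.one_apply, Matrix.neg_apply] at this
        simpa using this
      have h1 : ∀ b : Fin 4, c (1, b) = 0 := by
        intro b
        have := congrFun hc (0, b)
        simp [f, hM, blockMat, Fintype.sum_prod_type, Fin.sum_univ_two, h12, hdiag,
          Matrix.one_apply] at this
        simpa using this
      obtain ⟨e, b⟩ := v
      fin_cases e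
      · exact h0 b
      · exact h1 b
    have hspan : Submodule.span ℂ (Set.range f) = LinearMap.range M.mulVecLin := by
      apply Submodule.eq_of_le_of_finrank_le
        (Submodule.span_le.2 (Set.range_subset_iff.2 hfW))
      rw [finrank_span_eq_card hind]
      have : finrank ℂ (LinearMap.range M.mulVecLin) = 8 := hrank
      simp [this]
    intro i j
    ext a0 b
    have hmem : (fun p => M p (i, b)) ∈ Submodule.span ℂ (Set.range f) := by
      rw [hspan]
      exact ⟨Pi.single (i, b) 1, by ext p; simp [Matrix.mulVecLin_apply]⟩
    obtain ⟨c, hc⟩ := (mem_span_range_iff_exists_fun ℂ).1 hmem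
    have h0 : ∀ a : Fin 4, c (0, a) = -(σ 1 i a b) := by
      intro a
      have := congrFun hc (1, a)
      simp [f, hM, blockMat, Fintype.sum_prod_type, Fin.sum_univ_two, h21, hdiag,
        Matrix.one_apply, Matrix.neg_apply] at this
      linear_combination -this
    have h1 : ∀ a : Fin 4, c (1, a) = σ 0 i a b := by
      intro a
      have := congrFun hc (0, a)
      simp [f, hM, blockMat, Fintype.sum_prod_type, Fin.sum_univ_two, h12, hdiag,
        Matrix.one_apply] at this
      linear_combination this
    have hfin := congrFun hc (j, a0)
    simp only [f, hM, blockMat, Matrix.of_apply, Fintype.sum_prod_type,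
      Fin.sum_univ_two, Pi.add_apply, Finset.sum_apply, Pi.smul_apply, smul_eq_mul,
      Matrix.cons_val_zero, Matrix.cons_val_one, Matrix.head_cons] at hfin
    rw [hanti j 0, hanti j 1] at hfin
    simp only [Matrix.neg_apply, h0, h1, Fin.sum_univ_four] at hfin
    simp only [Matrix.sub_apply, Matrix.mul_apply, Fin.sum_univ_four]
    linear_combination -hfin
  refine ⟨fun i j _ _ => main i j, ?_⟩
  have z : ∀ i j : Fin 5,
      (σ 0 i * σ 1 j + σ 0 j * σ 1 i) - (σ 1 j * σ 0 i + σ 1 i * σ 0 j) = 0 := by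
    intro i j
    have h : (σ 0 i * σ 1 j - σ 1 i * σ 0 j) + (σ 0 j * σ 1 i - σ 1 j * σ 0 i) = 0 := by
      rw [← main j i, ← main i j, hanti i j]
      exact neg_add_cancel _
    calc (σ 0 i * σ 1 j + σ 0 j * σ 1 i) - (σ 1 j * σ 0 i + σ 1 i * σ 0 j)
        = (σ 0 i * σ 1 j - σ 1 i * σ 0 j) + (σ 0 j * σ 1 i - σ 1 j * σ 0 i) := by abel
      _ = 0 := h
  intro t1 t2 t3
  show _ * _ = _ * _
  rw [← sub_eq_zero]
  have expand : (t1 • σ 0 2 + t2 • σ 0 3 + t3 • σ 0 4) * (t1 • σ 1 2 + t2 • σ 1 3 + t3 • σ 1 4)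
      - (t1 • σ 1 2 + t2 • σ 1 3 + t3 • σ 1 4) * (t1 • σ 0 2 + t2 • σ 0 3 + t3 • σ 0 4)
      = ((t1*t1)/2) • ((σ 0 2 * σ 1 2 + σ 0 2 * σ 1 2) - (σ 1 2 * σ 0 2 + σ 1 2 * σ 0 2))
      + ((t2*t2)/2) • ((σ 0 3 * σ 1 3 + σ 0 3 * σ 1 3) - (σ 1 3 * σ 0 3 + σ 1 3 * σ 0 3))
      + ((t3*t3)/2) • ((σ 0 4 * σ 1 4 + σ 0 4 * σ 1 4) - (σ 1 4 * σ 0 4 + σ 1 4 * σ 0 4))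
      + (t1*t2) • ((σ 0 2 * σ 1 3 + σ 0 3 * σ 1 2) - (σ 1 3 * σ 0 2 + σ 1 2 * σ 0 3))
      + (t1*t3) • ((σ 0 2 * σ 1 4 + σ 0 4 * σ 1 2) - (σ 1 4 * σ 0 2 + σ 1 2 * σ 0 4))
      + (t2*t3) • ((σ 0 3 * σ 1 4 + σ 0 4 * σ 1 3) - (σ 1 4 * σ 0 3 + σ 1 3 * σ 0 4)) := by
    simp only [add_mul, mul_add, smul_mul_assoc, mul_smul_comm]
    module
  rw [expand, z 2 2, z 3 3, z 4 4, z 2 3, z 2 4, z 3 4]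
  simp
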